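/- Suppose the Banach spaces E, F satisfy: (1) for every continuous f : E → F and every continuous δ : E → (0, ∞) there is a C¹ map φ : E → F with ‖f(x) − φ(x)‖ ≤ δ(x) and Dφ(x) surjective for all x; (2) for every C¹ map φ : E → F and continuous η : E → (0, ∞) there is a C^k map g : E → F with ‖φ(x) − g(x)‖ ≤ η(x) and ‖Dφ(x) − Dg(x)‖ ≤ η(x) for all x. Assume additionally that E is separable. Then for every continuous f : E → F and continuous ε : E → (0, ∞) there exists a C^k map g : E → F with ‖f(x) − g(x)‖ ≤ ε(x) and Dg(x) surjective for all x ∈ E. -/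

import Mathlib

open Metric Set
open scoped NNReal

/-- The set of surjective bounded operators between Banach spaces is open. -/
lemma isOpen_setOf_surjective
    {E : Type*} [NormedAddCommGroup E] [NormedSpace ℝ E] [CompleteSpace E]
    {F : Type*} [NormedAddCommGroup F] [NormedSpace ℝ F] [CompleteSpace F] :
    IsOpen {L : E →L[ℝ] F | Function.Surjective L} := by
  rw [Metric.isOpen_iff]
  intro f hf
  have hr : f.range = ⊤ := LinearMap.range_eq_top.2 hf
  set fsymm := f.nonlinearRightInverseOfSurjective hr with hfsymm
  have hC : (0 : ℝ) < fsymm.nnnorm :=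
    ContinuousLinearMap.nonlinearRightInverseOfSurjective_nnnorm_pos f hr
  refine ⟨(fsymm.nnnorm : ℝ)⁻¹, by positivity, ?_⟩
  intro g hg
  rw [mem_ball, dist_eq_norm] at hg
  set c : ℝ≥0 := ‖g - f‖₊ with hc
  have hcR : (c : ℝ) = ‖g - f‖ := rfl
  have hclt : (c : ℝ) < (fsymm.nnnorm : ℝ)⁻¹ := by rw [hcR]; exact hg
  have happrox : ApproximatesLinearOn (⇑g) f Set.univ c := by
    intro x _ y _
    have h1 : g x - g y - f (x - y) = (g - f) (x - y) := by
      simp only [ContinuousLinearMap.sub_apply, map_sub]; abel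
    rw [h1, hcR]
    exact (g - f).le_opNorm (x - y)
  intro y
  have hpos : 0 < (fsymm.nnnorm : ℝ)⁻¹ - c := by linarith
  set ε : ℝ := ‖y - g 0‖ / ((fsymm.nnnorm : ℝ)⁻¹ - c) with hε
  have hε0 : 0 ≤ ε := div_nonneg (norm_nonneg _) hpos.le
  have hsurj := happrox.surjOn_closedBall_of_nonlinearRightInverse fsymm hε0
    (Set.subset_univ (closedBall 0 ε))
  have hy : y ∈ closedBall (g 0) (((fsymm.nnnorm : ℝ)⁻¹ - c) * ε) := by
    rw [mem_closedBall, dist_eq_norm, hε, mul_div_cancel₀ _ hpos.ne']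
  obtain ⟨x, -, hx⟩ := hsurj hy
  exact ⟨x, hx⟩

/-- If (1) continuous maps `E → F` can be finely approximated by `C¹` maps with
surjective derivatives, and (2) `C¹` maps can be finely approximated, together with
their derivatives, by `C^k` maps, and `E` is separable, then continuous maps `E → F`
can be finely approximated by `C^k` maps with surjective derivatives. -/
theorem C1_approximation_is_enough
    {E : Type*} [NormedAddCommGroup E] [NormedSpace ℝ E] [CompleteSpace E]
    [TopologicalSpace.SeparableSpace E]
    {F : Type*} [NormedAddCommGroup F] [NormedSpace ℝ F] [CompleteSpace F]
    (k : ℕ∞)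
    (h1 : ∀ f : E → F, Continuous f →
      ∀ δ : E → ℝ, Continuous δ → (∀ x, 0 < δ x) →
      ∃ φ : E → F, ContDiff ℝ 1 φ ∧ (∀ x, ‖f x - φ x‖ ≤ δ x) ∧
        ∀ x, Function.Surjective (fderiv ℝ φ x))
    (h2 : ∀ φ : E → F, ContDiff ℝ 1 φ →
      ∀ η : E → ℝ, Continuous η → (∀ x, 0 < η x) →
      ∃ g : E → F, ContDiff ℝ k g ∧ (∀ x, ‖φ x - g x‖ ≤ η x) ∧
        ∀ x, ‖fderiv ℝ φ x - fderiv ℝ g x‖ ≤ η x) :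
    ∀ f : E → F, Continuous f →
      ∀ ε : E → ℝ, Continuous ε → (∀ x, 0 < ε x) →
      ∃ g : E → F, ContDiff ℝ k g ∧ (∀ x, ‖f x - g x‖ ≤ ε x) ∧
        ∀ x, Function.Surjective (fderiv ℝ g x) := by
  intro f hf ε hε hεpos
  -- Step 1: approximate `f` by a `C¹` map `φ` with surjective derivative, within `ε/2`.
  obtain ⟨φ, hφ1, hφapprox, hφsurj⟩ :=
    h1 f hf (fun x => ε x / 2) (hε.div_const 2) (fun x => by linarith [hεpos x])
  -- The derivative of φ is continuous.
  have hDφ : Continuous (fderiv ℝ φ) := hφ1.continuous_fderiv one_ne_zero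
  -- The non-surjective operators form a closed set.
  set S : Set (E →L[ℝ] F) := {L | Function.Surjective L} with hS
  have hScl : IsClosed Sᶜ := isOpen_setOf_surjective.isClosed_compl
  by_cases hne : Sᶜ.Nonempty
  · -- distance from `Dφ x` to the non-surjective operators
    set d : E → ℝ := fun x => infDist (fderiv ℝ φ x) Sᶜ with hd
    have hdcont : Continuous d := (continuous_infDist_pt Sᶜ).comp hDφ
    have hdpos : ∀ x, 0 < d x := fun x =>
      (hScl.notMem_iff_infDist_pos hne).1 (not_not_intro (hφsurj x))
    set η : E → ℝ := fun x => min (ε x / 2) (d x / 2) with hη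
    have hηcont : Continuous η := Continuous.min (hε.div_const 2) (hdcont.div_const 2)
    have hηpos : ∀ x, 0 < η x := fun x =>
      lt_min (by linarith [hεpos x]) (by linarith [hdpos x])
    obtain ⟨g, hgk, hgapprox, hgderiv⟩ := h2 φ hφ1 η hηcont hηpos
    refine ⟨g, hgk, fun x => ?_, fun x => ?_⟩
    · calc ‖f x - g x‖ ≤ ‖f x - φ x‖ + ‖φ x - g x‖ := by
            simpa using norm_sub_le_norm_sub_add_norm_sub (f x) (φ x) (g x)
        _ ≤ ε x / 2 + η x := add_le_add (hφapprox x) (hgapprox x)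
        _ ≤ ε x / 2 + ε x / 2 := by linarith [min_le_left (ε x / 2) (d x / 2)]
        _ = ε x := by ring
    · by_contra hcon
      have hmem : fderiv ℝ g x ∈ Sᶜ := hcon
      have h1' : d x ≤ dist (fderiv ℝ φ x) (fderiv ℝ g x) := infDist_le_dist_of_mem hmem
      rw [dist_eq_norm] at h1'
      have h2' : ‖fderiv ℝ φ x - fderiv ℝ g x‖ ≤ d x / 2 :=
        (hgderiv x).trans (min_le_right _ _)
      linarith [hdpos x]
  · -- every operator is surjective
    rw [Set.not_nonempty_iff_eq_empty, Set.compl_empty_iff] at hne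
    obtain ⟨g, hgk, hgapprox, -⟩ :=
      h2 φ hφ1 (fun x => ε x / 2) (hε.div_const 2) (fun x => by linarith [hεpos x])
    refine ⟨g, hgk, fun x => ?_, fun x => ?_⟩
    · calc ‖f x - g x‖ ≤ ‖f x - φ x‖ + ‖φ x - g x‖ := by
            simpa using norm_sub_le_norm_sub_add_norm_sub (f x) (φ x) (g x)
        _ ≤ ε x / 2 + ε x / 2 := add_le_add (hφapprox x) (hgapprox x)
        _ = ε x := by ring
    · have : fderiv ℝ g x ∈ S := hne ▸ Set.mem_univ _
      exact this
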